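/- Let k be a field, n ≥ 1, d = (d₁,…,dₙ) with each dᵢ ≥ 1, and P(X,Z) ∈ k[X₁,…,Xₙ,Z] monic in Z with deg_Z P ≥ 1. Then the quotient ring R = k[X₁,…,Xₙ,Y,Z]/(X^d·Y − P(X,Z)) is an integral domain, where X^d = X₁^{d₁}⋯Xₙ^{dₙ}. -/

import Mathlib

open Polynomial MvPolynomial

/-- A linear polynomial `C u * X - C v` over a domain with `u ≠ 0` and `u, v` having no
common non-unit divisor is irreducible. -/
theorem irred_aux {A : Type*} [CommRing A] [IsDomain A] {u v : A} (hu : u ≠ 0)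
    (h : ∀ a : A, a ∣ u → a ∣ v → IsUnit a) :
    Irreducible (Polynomial.C u * Polynomial.X - Polynomial.C v) := by
  have hrw : Polynomial.C u * Polynomial.X - Polynomial.C v
      = Polynomial.C u * Polynomial.X + Polynomial.C (-v) := by rw [map_neg]; ring
  have hdeg : (Polynomial.C u * Polynomial.X - Polynomial.C v).natDegree = 1 := by
    rw [hrw]; exact Polynomial.natDegree_linear hu
  have hne : (Polynomial.C u * Polynomial.X - Polynomial.C v) ≠ 0 := by
    intro h0; rw [h0] at hdeg; simp at hdeg
  have key : ∀ g : Polynomial A, g.natDegree = 0 →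
      g ∣ (Polynomial.C u * Polynomial.X - Polynomial.C v) → IsUnit g := by
    intro g hg hdvd
    obtain ⟨a, rfl⟩ : ∃ a, g = Polynomial.C a := ⟨g.coeff 0, (Polynomial.eq_C_of_natDegree_eq_zero hg)⟩
    rw [Polynomial.C_dvd_iff_dvd_coeff] at hdvd
    have h1 : a ∣ u := by have := hdvd 1; simpa using this
    have h0 : a ∣ v := by
      have := hdvd 0
      simp only [Polynomial.coeff_sub, Polynomial.coeff_C_mul, Polynomial.coeff_X_zero,
        mul_zero, Polynomial.coeff_C_zero, zero_sub, dvd_neg] at this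
      exact this
    exact Polynomial.isUnit_C.mpr (h a h1 h0)
  constructor
  · exact fun hunit => by
      have := Polynomial.natDegree_eq_zero_of_isUnit hunit
      omega
  · intro g₁ g₂ hf
    have hg₁ : g₁ ≠ 0 := by rintro rfl; simp at hf; exact hne hf
    have hg₂ : g₂ ≠ 0 := by rintro rfl; simp at hf; exact hne hf
    have : g₁.natDegree + g₂.natDegree = 1 := by
      rw [← Polynomial.natDegree_mul hg₁ hg₂, ← hf, hdeg]
    rcases Nat.add_eq_one_iff.mp this with ⟨h1, _⟩ | ⟨_, h2⟩
    · exact Or.inl (key g₁ h1 ⟨g₂, hf⟩)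
    · exact Or.inr (key g₂ h2 ⟨g₁, by rw [hf, mul_comm]⟩)

noncomputable def toPoly (n : ℕ) (k : Type*) [Field k] :
    MvPolynomial (Fin n ⊕ Fin 2) k →ₐ[k] Polynomial (Polynomial (MvPolynomial (Fin n) k)) :=
  MvPolynomial.aeval
    (Sum.elim (fun i => Polynomial.C (Polynomial.C (MvPolynomial.X i)))
      (fun j => if j = 0 then Polynomial.X else Polynomial.C Polynomial.X))

noncomputable def fromPoly (n : ℕ) (k : Type*) [Field k] :
    Polynomial (Polynomial (MvPolynomial (Fin n) k)) →ₐ[k] MvPolynomial (Fin n ⊕ Fin 2) k :=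
  Polynomial.eval₂AlgHom
    (Polynomial.eval₂AlgHom (MvPolynomial.rename Sum.inl) (MvPolynomial.X (Sum.inr 1))
      (fun _ => Commute.all _ _))
    (MvPolynomial.X (Sum.inr 0)) (fun _ => Commute.all _ _)

noncomputable def polyEquiv (n : ℕ) (k : Type*) [Field k] :
    MvPolynomial (Fin n ⊕ Fin 2) k ≃ₐ[k] Polynomial (Polynomial (MvPolynomial (Fin n) k)) :=
  AlgEquiv.ofAlgHom (toPoly n k) (fromPoly n k)
    (by
      ext : 1
      · ext : 1
        · apply MvPolynomial.algHom_ext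
          intro i
          simp [toPoly, fromPoly]
        · simp [toPoly, fromPoly]
      · simp [toPoly, fromPoly])
    (by
      apply MvPolynomial.algHom_ext
      rintro (i | j)
      · simp [toPoly, fromPoly]
      · fin_cases j <;> simp [toPoly, fromPoly])

/-- In `k[X₁,…,Xₙ,Y,Z]`, realized as `MvPolynomial (Fin n ⊕ Fin 2) k` with `inr 0 = Y` and
`inr 1 = Z`, the quotient by `(X^d·Y − P(X,Z))` is an integral domain, where
`P ∈ k[X₁,…,Xₙ][Z]` is monic in `Z` of `Z`-degree ≥ 1 and all `dᵢ ≥ 1`. -/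
theorem stmt4 {k : Type*} [Field k] (n : ℕ) (hn : 1 ≤ n) (d : Fin n → ℕ) (hd : ∀ i, 1 ≤ d i)
    (P : Polynomial (MvPolynomial (Fin n) k)) (hP : P.Monic) (hdeg : 1 ≤ P.natDegree) :
    IsDomain
      (MvPolynomial (Fin n ⊕ Fin 2) k ⧸
        Ideal.span
          {(∏ i, MvPolynomial.X (Sum.inl i) ^ d i) * MvPolynomial.X (Sum.inr 0) -
            Polynomial.eval₂
              (MvPolynomial.rename (Sum.inl : Fin n → Fin n ⊕ Fin 2)).toRingHom
              (MvPolynomial.X (Sum.inr 1)) P}) := by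
  set b : MvPolynomial (Fin n) k := ∏ i, MvPolynomial.X i ^ d i with hb
  set f : MvPolynomial (Fin n ⊕ Fin 2) k :=
    (∏ i, MvPolynomial.X (Sum.inl i) ^ d i) * MvPolynomial.X (Sum.inr 0) -
      Polynomial.eval₂ (MvPolynomial.rename (Sum.inl : Fin n → Fin n ⊕ Fin 2)).toRingHom
        (MvPolynomial.X (Sum.inr 1)) P with hf
  have hbne : b ≠ 0 := by
    apply Finset.prod_ne_zero_iff.mpr
    intro i _
    exact pow_ne_zero _ (MvPolynomial.X_ne_zero i)
  -- the image of f under the isomorphism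
  have himg : (polyEquiv n k) f
      = Polynomial.C (Polynomial.C b) * Polynomial.X - Polynomial.C P := by
    have hcomp : ((toPoly n k : MvPolynomial (Fin n ⊕ Fin 2) k →+* _).comp
        (MvPolynomial.rename (Sum.inl : Fin n → Fin n ⊕ Fin 2)).toRingHom)
        = (Polynomial.C.comp Polynomial.C :
            MvPolynomial (Fin n) k →+* Polynomial (Polynomial (MvPolynomial (Fin n) k))) := by
      apply MvPolynomial.ringHom_ext
      · intro r
        simp [toPoly, MvPolynomial.algebraMap_eq, Polynomial.algebraMap_apply]
      · intro i
        simp [toPoly]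
    have hCP : Polynomial.eval₂
        (Polynomial.C.comp Polynomial.C :
          MvPolynomial (Fin n) k →+* Polynomial (Polynomial (MvPolynomial (Fin n) k)))
        (Polynomial.C Polynomial.X) P = Polynomial.C P := by
      have := Polynomial.hom_eval₂ P (Polynomial.C : MvPolynomial (Fin n) k →+* _)
        (Polynomial.C : Polynomial (MvPolynomial (Fin n) k) →+* _) Polynomial.X
      rw [Polynomial.eval₂_C_X] at this
      exact this.symm
    show (toPoly n k) f = _
    rw [hf, map_sub, map_mul, map_prod]
    have heval : (toPoly n k) (Polynomial.eval₂
        (MvPolynomial.rename (Sum.inl : Fin n → Fin n ⊕ Fin 2)).toRingHom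
        (MvPolynomial.X (Sum.inr 1)) P) = Polynomial.C P := by
      have hx : (toPoly n k :
            MvPolynomial (Fin n ⊕ Fin 2) k →+* Polynomial (Polynomial (MvPolynomial (Fin n) k)))
          (MvPolynomial.X (Sum.inr 1)) = Polynomial.C Polynomial.X := by
        simp [toPoly]
      have := Polynomial.hom_eval₂ P
        (MvPolynomial.rename (Sum.inl : Fin n → Fin n ⊕ Fin 2)).toRingHom
        (toPoly n k :
          MvPolynomial (Fin n ⊕ Fin 2) k →+* Polynomial (Polynomial (MvPolynomial (Fin n) k)))
        (MvPolynomial.X (Sum.inr 1))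
      rw [hcomp, hx, hCP] at this
      exact this
    rw [heval]
    congr 1
    have : ∀ i : Fin n, (toPoly n k) (MvPolynomial.X (Sum.inl i) ^ d i)
        = Polynomial.C (Polynomial.C (MvPolynomial.X i ^ d i)) := by
      intro i; simp [toPoly]
    rw [Finset.prod_congr rfl (fun i _ => this i)]
    refine congrArg₂ (· * ·) ?_ (by simp [toPoly])
    rw [← map_prod, ← map_prod]
  have hprime : Prime f := by
    suffices h : Prime ((polyEquiv n k) f) from comap_prime (polyEquiv n k) (polyEquiv n k).symm (fun a => by simp) h
    show Prime ((polyEquiv n k) f)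
    rw [himg]
    have hune : (Polynomial.C b : Polynomial (MvPolynomial (Fin n) k)) ≠ 0 := by
      simpa using hbne
    have hcop : ∀ a : Polynomial (MvPolynomial (Fin n) k),
        a ∣ Polynomial.C b → a ∣ P → IsUnit a := by
      intro a hau hav
      have hane : Polynomial.C b ≠ (0 : Polynomial (MvPolynomial (Fin n) k)) := by
        simpa using hbne
      have hadeg : a.natDegree = 0 := by
        have := Polynomial.natDegree_le_of_dvd hau hane
        simpa using this
      obtain ⟨a₀, rfl⟩ : ∃ a₀, a = Polynomial.C a₀ :=
        ⟨a.coeff 0, Polynomial.eq_C_of_natDegree_eq_zero hadeg⟩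
      rw [Polynomial.C_dvd_iff_dvd_coeff] at hav
      have : a₀ ∣ P.coeff P.natDegree := hav P.natDegree
      rw [Polynomial.Monic.coeff_natDegree hP] at this
      exact Polynomial.isUnit_C.mpr (isUnit_of_dvd_one this)
    exact UniqueFactorizationMonoid.irreducible_iff_prime.mp (irred_aux hune hcop)
  rw [Ideal.Quotient.isDomain_iff_prime, Ideal.span_singleton_prime hprime.ne_zero]
  exact hprime
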